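/- Let ℓ ≥ 1 be a natural number, let a, N0, P_LI be reals with N0 > 0, P_LI ≥ 0 and a − ℓ > 0, and for each l ∈ Fin ℓ let K2 l be a real with a − K2 l − 1 > 0, let I l ≥ Ĩ l ≥ 0 be interference powers, β l > 0 and β' l > 0 channel gains, R' l > 0 a normalized rate, and Δk2 l a real number. Define γ1 l = (a − K2 l − 1)·(I l + N0), γ2 l = (a − ℓ)·(Ĩ l + N0), and Δ l = ((a − K2 l − 1)·(a − ℓ)/γ1 l)·((−Δk2 l)/(2^(R' l) − 1) + P_LI/ℓ). If for every l we have (γ2 l/γ1 l)·(β' l)⁻¹ ≤ (β l)⁻¹ + Δ l, then ∑_{l} (γ2 l·(β' l)⁻¹ − γ1 l·(β l)⁻¹)/((a − K2 l − 1)·(a − ℓ)) ≤ ∑_{l} (−Δk2 l)/(2^(R' l) − 1) + P_LI. -/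

import Mathlib

open Finset

/-- Theorem 1, spatial-multiplexing case: the per-user sufficient conditions imply the
summed inequality stating that switching off the base station and re-assigning its
users is energy optimal. -/
theorem switch_off_condition_sm
    (ℓ : ℕ) (hℓ : 1 ≤ ℓ)
    (a N0 P_LI : ℝ) (hN0 : 0 < N0) (hPLI : 0 ≤ P_LI) (ha : 0 < a - ℓ)
    (K2 : Fin ℓ → ℝ) (hK2 : ∀ l, 0 < a - K2 l - 1)
    (I Itilde : Fin ℓ → ℝ) (hItilde : ∀ l, 0 ≤ Itilde l) (hI : ∀ l, Itilde l ≤ I l)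
    (β β' : Fin ℓ → ℝ) (hβ : ∀ l, 0 < β l) (hβ' : ∀ l, 0 < β' l)
    (R' : Fin ℓ → ℝ) (hR' : ∀ l, 0 < R' l)
    (Δk2 : Fin ℓ → ℝ)
    (hcond : ∀ l,
      ((a - ℓ) * (Itilde l + N0)) / ((a - K2 l - 1) * (I l + N0)) * (β' l)⁻¹
        ≤ (β l)⁻¹
          + ((a - K2 l - 1) * (a - ℓ) / ((a - K2 l - 1) * (I l + N0)))
            * ((-Δk2 l) / ((2 : ℝ) ^ (R' l) - 1) + P_LI / ℓ)) :
    ∑ l, ((a - ℓ) * (Itilde l + N0) * (β' l)⁻¹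
            - (a - K2 l - 1) * (I l + N0) * (β l)⁻¹)
          / ((a - K2 l - 1) * (a - ℓ))
      ≤ (∑ l, (-Δk2 l) / ((2 : ℝ) ^ (R' l) - 1)) + P_LI := by
  have hℓpos : (0:ℝ) < (ℓ:ℝ) := by exact_mod_cast hℓ
  have key : ∀ l : Fin ℓ,
      ((a - ℓ) * (Itilde l + N0) * (β' l)⁻¹
            - (a - K2 l - 1) * (I l + N0) * (β l)⁻¹)
          / ((a - K2 l - 1) * (a - ℓ))
        ≤ (-Δk2 l) / ((2 : ℝ) ^ (R' l) - 1) + P_LI / ℓ := by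
    intro l
    set T := (-Δk2 l) / ((2 : ℝ) ^ (R' l) - 1) + P_LI / ℓ with hT
    have hIN : 0 < I l + N0 := by nlinarith [hItilde l, hI l]
    have hc : 0 < (a - K2 l - 1) * (I l + N0) := mul_pos (hK2 l) hIN
    have hd : 0 < (a - K2 l - 1) * (a - ℓ) := mul_pos (hK2 l) ha
    have h := hcond l
    have h' : (a - ℓ) * (Itilde l + N0) * (β' l)⁻¹
        ≤ (a - K2 l - 1) * (I l + N0) * (β l)⁻¹ + (a - K2 l - 1) * (a - ℓ) * T := by
      have h2 := mul_le_mul_of_nonneg_right h hc.le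
      calc (a - ℓ) * (Itilde l + N0) * (β' l)⁻¹
          = ((a - ℓ) * (Itilde l + N0) / ((a - K2 l - 1) * (I l + N0)) * (β' l)⁻¹)
              * ((a - K2 l - 1) * (I l + N0)) := by
            rw [div_mul_eq_mul_div, div_mul_cancel₀ _ hc.ne']
        _ ≤ ((β l)⁻¹ + (a - K2 l - 1) * (a - ℓ) / ((a - K2 l - 1) * (I l + N0)) * T)
              * ((a - K2 l - 1) * (I l + N0)) := h2
        _ = (a - K2 l - 1) * (I l + N0) * (β l)⁻¹ + (a - K2 l - 1) * (a - ℓ) * T := by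
            field_simp [(hK2 l).ne', hIN.ne']
            try ring
    rw [div_le_iff₀ hd]
    linarith [h']
  calc ∑ l, ((a - ℓ) * (Itilde l + N0) * (β' l)⁻¹
            - (a - K2 l - 1) * (I l + N0) * (β l)⁻¹)
          / ((a - K2 l - 1) * (a - ℓ))
      ≤ ∑ l, ((-Δk2 l) / ((2 : ℝ) ^ (R' l) - 1) + P_LI / ℓ) :=
        Finset.sum_le_sum fun l _ => key l
    _ = (∑ l, (-Δk2 l) / ((2 : ℝ) ^ (R' l) - 1)) + P_LI := by
        rw [Finset.sum_add_distrib, Finset.sum_const, Finset.card_univ, Fintype.card_fin]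
        congr 1
        rw [nsmul_eq_mul]
        field_simp [hℓpos.ne']
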